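/- If there exists a Kurepa tree, then the polarized relation (ω₂, ω₁) → (2, ω₁)_ω fails: there is a coloring c : ω₂ × ω₁ → ω admitting no pair of distinct ordinals α₀, α₁ < ω₂ and uncountable B ⊆ ω₁ with c constant on {α₀, α₁} × B. -/

import Mathlib

open Cardinal Set Ordinal

noncomputable section

/-- A tree of height `κ`, presented with an explicit level function. -/
structure OrdTree (κ : Ordinal) where
  N : Type
  lt : N → N → Prop
  lt_trans : ∀ {x y z}, lt x y → lt y z → lt x z
  lev : N → Ordinal
  lev_lt : ∀ x, lev x < κ
  lt_lev : ∀ {x y}, lt x y → lev x < lev y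
  exists_pred : ∀ x, ∀ β < lev x, ∃! y, lt y x ∧ lev y = β
  lev_surj : ∀ β < κ, ∃ x, lev x = β

namespace OrdTree

variable {κ : Ordinal}

/-- The `β`-th level of the tree. -/
def Lev (T : OrdTree κ) (β : Ordinal) : Set T.N := {x | T.lev x = β}

/-- A cofinal branch: a chain meeting every level below `κ`. -/
def IsBranch (T : OrdTree κ) (b : Set T.N) : Prop :=
  (∀ x ∈ b, ∀ y ∈ b, T.lt x y ∨ x = y ∨ T.lt y x) ∧
  (∀ β < κ, ∃ x ∈ b, T.lev x = β)

end OrdTree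

/-- A Kurepa tree: a tree of height `ω₁` all of whose levels are countable,
with at least `ℵ₂` many cofinal branches. -/
def IsKurepaTree (T : OrdTree (Cardinal.aleph 1).ord) : Prop :=
  (∀ β, (T.Lev β).Countable) ∧
  Cardinal.aleph 2 ≤ #{b : Set T.N // T.IsBranch b}

lemma branch_unique_at_level {κ} (T : OrdTree κ) {b : Set T.N} (hb : T.IsBranch b)
    {x y : T.N} (hx : x ∈ b) (hy : y ∈ b) (hxy : T.lev x = T.lev y) : x = y := by
  rcases hb.1 x hx y hy with h | h | h
  · exact absurd (T.lt_lev h) (by simp [hxy])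
  · exact h
  · exact absurd (T.lt_lev h) (by simp [hxy])

lemma branch_lt_of_mem {κ} (T : OrdTree κ) {b : Set T.N} (hb : T.IsBranch b)
    {u x : T.N} (hu : u ∈ b) (hx : x ∈ b) (hlt : T.lev u < T.lev x) : T.lt u x := by
  rcases hb.1 u hu x hx with h | h | h
  · exact h
  · exact absurd hlt (by simp [h])
  · exact absurd hlt (by simpa using (T.lt_lev h).not_gt)

lemma branch_agree_below {κ} (T : OrdTree κ) {b₀ b₁ : Set T.N} (h₀ : T.IsBranch b₀)
    (h₁ : T.IsBranch b₁) {x : T.N} (hx₀ : x ∈ b₀) (hx₁ : x ∈ b₁)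
    {u v : T.N} (hu : u ∈ b₀) (hv : v ∈ b₁) (huv : T.lev u = T.lev v)
    (hlt : T.lev u < T.lev x) : u = v := by
  have hux : T.lt u x := branch_lt_of_mem T h₀ hu hx₀ hlt
  have hvx : T.lt v x := branch_lt_of_mem T h₁ hv hx₁ (huv ▸ hlt)
  exact (T.exists_pred x (T.lev u) hlt).unique ⟨hux, rfl⟩ ⟨hvx, huv.symm⟩

lemma branch_subset {κ} (T : OrdTree κ) {b₀ b₁ : Set T.N} (h₀ : T.IsBranch b₀)
    (h₁ : T.IsBranch b₁)
    (hag : ∀ γ < κ, ∃ x, x ∈ b₀ ∧ x ∈ b₁ ∧ γ < T.lev x) : b₀ ⊆ b₁ := by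
  intro z hz
  obtain ⟨x, hx₀, hx₁, hxlev⟩ := hag (T.lev z) (T.lev_lt z)
  obtain ⟨w, hw, hwlev⟩ := h₁.2 (T.lev z) (T.lev_lt z)
  have : z = w := branch_agree_below T h₀ h₁ hx₀ hx₁ hz hw hwlev.symm hxlev
  exact this ▸ hw

lemma down_exists {a : Cardinal.{u}} {b : Cardinal.{v}}
    (hab : Cardinal.lift.{v} a = Cardinal.lift.{u} b)
    {o : Ordinal.{v}} (h : o < b.ord) :
    ∃ o' : Ordinal.{u}, o' < a.ord ∧ Ordinal.lift.{v} o' = Ordinal.lift.{u} o := by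
  have h1 : Ordinal.lift.{u} o < Ordinal.lift.{v} a.ord := by
    rw [Cardinal.lift_ord, hab, ← Cardinal.lift_ord]
    exact Ordinal.lift_lt.mpr h
  obtain ⟨o', ho', hl⟩ := Ordinal.lt_lift_iff.mp h1
  exact ⟨o', ho', hl⟩

universe u v w

lemma stmt2_aux (T : OrdTree.{u} (Cardinal.aleph 1).ord) (hT : IsKurepaTree T) :
    ∃ c : Ordinal.{v} → Ordinal.{w} → ℕ,
      ¬ ∃ α₀ α₁ : Ordinal.{v}, α₀ < (Cardinal.aleph 2).ord ∧ α₁ < (Cardinal.aleph 2).ord ∧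
        α₀ ≠ α₁ ∧ ∃ B : Set Ordinal.{w}, B ⊆ Set.Iio (Cardinal.aleph 1).ord ∧
          ¬ B.Countable ∧
          ∃ n : ℕ, ∀ β ∈ B, c α₀ β = n ∧ c α₁ β = n := by
  classical
  obtain ⟨hlev, hcard⟩ := hT
  -- embedding from the type of ω₂ into branches
  have h2 : #((Cardinal.aleph 2).ord.ToType) ≤ #{b : Set T.N // T.IsBranch b} := by
    rwa [Cardinal.mk_toType, Cardinal.card_ord]
  obtain ⟨G⟩ := Cardinal.le_def _ _ |>.mp h2
  -- downward universe transfer for ordinals below ω₂ and ω₁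
  have hA : ∀ α : Ordinal.{v}, α < (Cardinal.aleph 2).ord →
      ∃ α' : Ordinal.{0}, α' < (Cardinal.aleph 2).ord ∧
        Ordinal.lift.{v} α' = Ordinal.lift.{0} α :=
    fun α hα => down_exists (by simp) hα
  choose dA hdA_lt hdA_lift using hA
  have hB : ∀ β : Ordinal.{w}, β < (Cardinal.aleph 1).ord →
      ∃ β' : Ordinal.{u}, β' < (Cardinal.aleph 1).ord ∧
        Ordinal.lift.{w} β' = Ordinal.lift.{u} β :=
    fun β hβ => down_exists (by simp) hβ
  choose dB hdB_lt hdB_lift using hB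
  -- injections of levels into ℕ
  choose e he using fun β => Set.countable_iff_exists_injective.mp (hlev β)
  -- node of a branch at a level
  have hnode : ∀ (b : {b : Set T.N // T.IsBranch b}) (β : Ordinal),
      β < (Cardinal.aleph 1).ord → ∃ x, x ∈ b.1 ∧ T.lev x = β := by
    intro b β hβ
    obtain ⟨x, hx, hl⟩ := b.2.2 β hβ
    exact ⟨x, hx, hl⟩
  choose node hnode_mem hnode_lev using hnode
  set F : ∀ α : Ordinal.{v}, α < (Cardinal.aleph 2).ord → {b : Set T.N // T.IsBranch b} :=
    fun α hα => G ((Ordinal.ToType.mk (o := (Cardinal.aleph 2).ord)) ⟨dA α hα, hdA_lt α hα⟩) with hF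
  refine ⟨fun α β =>
    if hα : α < (Cardinal.aleph 2).ord then
      if hβ : β < (Cardinal.aleph 1).ord then
        e (dB β hβ) ⟨node (F α hα) (dB β hβ) (hdB_lt β hβ), hnode_lev _ _ _⟩
      else 0
    else 0, ?_⟩
  rintro ⟨α₀, α₁, hα₀, hα₁, hne, B, hBsub, hBunc, n, hn⟩
  -- B is unbounded in ω₁
  have hIio : ∀ o : Ordinal.{w}, o < (Cardinal.aleph 1).ord → (Set.Iio o).Countable := by
    intro o ho
    rw [countable_iff_lt_aleph_one, Ordinal.mk_Iio_ordinal, Cardinal.lift_lt_aleph_one]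
    exact Cardinal.lt_ord.mp ho
  have hunb : ∀ γ : Ordinal.{w}, γ < (Cardinal.aleph 1).ord → ∃ β ∈ B, γ < β := by
    intro γ hγ
    by_contra hc
    push_neg at hc
    apply hBunc
    have hsucc : γ + 1 < (Cardinal.aleph 1).ord := by
      have := Cardinal.isSuccLimit_ord (le_of_lt Cardinal.aleph0_lt_aleph_one)
      exact this.add_one_lt hγ
    refine ((hIio (γ + 1) hsucc).mono ?_)
    intro β hβ
    exact lt_of_le_of_lt (hc β hβ) (lt_add_one γ)
  set b₀ := F α₀ hα₀ with hb₀
  set b₁ := F α₁ hα₁ with hb₁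
  -- the branches share the node at level (dB β _) for every β ∈ B
  have hshare : ∀ β (hβB : β ∈ B) (hβ : β < (Cardinal.aleph 1).ord),
      node b₀ (dB β hβ) (hdB_lt β hβ) = node b₁ (dB β hβ) (hdB_lt β hβ) := by
    intro β hβB hβ
    obtain ⟨hc₀, hc₁⟩ := hn β hβB
    simp only [dif_pos hα₀, dif_pos hβ] at hc₀
    simp only [dif_pos hα₁, dif_pos hβ] at hc₁
    have := (he (dB β hβ))
      (a₁ := ⟨node b₀ (dB β hβ) (hdB_lt β hβ), hnode_lev _ _ _⟩)
      (a₂ := ⟨node b₁ (dB β hβ) (hdB_lt β hβ), hnode_lev _ _ _⟩) (by rw [hc₀, hc₁])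
    exact congrArg Subtype.val this
  have hag : ∀ γ : Ordinal.{u}, γ < (Cardinal.aleph 1).ord →
      ∃ x, x ∈ b₀.1 ∧ x ∈ b₁.1 ∧ γ < T.lev x := by
    intro γ hγ
    obtain ⟨δ, hδlt, hδlift⟩ :=
      down_exists (a := (Cardinal.aleph 1 : Cardinal.{w})) (by simp) hγ
    obtain ⟨β, hβB, hδβ⟩ := hunb δ hδlt
    have hβ : β < (Cardinal.aleph 1).ord := hBsub hβB
    have hγlt : γ < dB β hβ := by
      refine Ordinal.lift_lt.mp ?_
      rw [hdB_lift β hβ, ← hδlift]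
      exact Ordinal.lift_lt.mpr hδβ
    refine ⟨node b₀ (dB β hβ) (hdB_lt β hβ), hnode_mem _ _ _, ?_, ?_⟩
    · rw [hshare β hβB hβ]; exact hnode_mem _ _ _
    · rw [hnode_lev]; exact hγlt
  have hag' : ∀ γ : Ordinal.{u}, γ < (Cardinal.aleph 1).ord →
      ∃ x, x ∈ b₁.1 ∧ x ∈ b₀.1 ∧ γ < T.lev x := by
    intro γ hγ
    obtain ⟨x, h1, h2, h3⟩ := hag γ hγ
    exact ⟨x, h2, h1, h3⟩
  have hbeq : b₀ = b₁ := by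
    apply Subtype.ext
    exact Set.Subset.antisymm (branch_subset T b₀.2 b₁.2 hag) (branch_subset T b₁.2 b₀.2 hag')
  rw [hb₀, hb₁, hF] at hbeq
  have h3 := (Ordinal.ToType.mk (o := (Cardinal.aleph 2).ord)).injective (G.injective hbeq)
  have h4 : dA α₀ hα₀ = dA α₁ hα₁ := congrArg Subtype.val h3
  apply hne
  refine Ordinal.lift_inj.mp ?_
  rw [← hdA_lift α₀ hα₀, ← hdA_lift α₁ hα₁, h4]

theorem stmt2
    (h : ∃ T : OrdTree (Cardinal.aleph 1).ord, IsKurepaTree T) :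
    ∃ c : Ordinal → Ordinal → ℕ,
      ¬ ∃ α₀ α₁ : Ordinal, α₀ < (Cardinal.aleph 2).ord ∧ α₁ < (Cardinal.aleph 2).ord ∧
        α₀ ≠ α₁ ∧ ∃ B : Set Ordinal, B ⊆ Set.Iio (Cardinal.aleph 1).ord ∧
          ¬ B.Countable ∧
          ∃ n : ℕ, ∀ β ∈ B, c α₀ β = n ∧ c α₁ β = n := by
  obtain ⟨T, hT⟩ := h
  exact stmt2_aux T hT

end
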